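/- (Compatibility of the gl(n|m) dynamical equations, Theorem 1, first part.) For any z_1,…,z_k ∈ ℂ and any pairwise distinct λ_1,…,λ_N ∈ ℂ, the dynamical connection matrices A_a := ∑_{j=1}^k z_j e^{(j)}_{aa} + ∑_{b ≠ a} (−1)^{p(b)} (E_{ab}E_{ba} − E_{aa})/(λ_a − λ_b), a = 1,…,N, commute pairwise: [A_a, A_b] = 0 for all a, b. Together with the identity (−1)^{p(a)}(E_{ba}E_{ab}−E_{bb}) = (−1)^{p(b)}(E_{ab}E_{ba}−E_{aa}), this is the flatness of the system of operators κ∂_{λ_a} − A_a. -/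
import Mathlib


open Finset

namespace Glnm

/-- Parity: `p(a) = 0` for bosonic indices (`a ≤ n` in 1-based terms, i.e. `a.val < n`),
`p(a) = 1` for fermionic ones. -/
def par (n N : ℕ) (a : Fin N) : ℕ := if (a : ℕ) < n then 0 else 1

/-- The Koszul-sign realization `e^{(j)}_{ab} = σ^{p(a)+p(b)} ⊗ ⋯ ⊗ σ^{p(a)+p(b)} ⊗ e_{ab} ⊗ I ⊗ ⋯ ⊗ I`
on `(ℂ^N)^{⊗k}`, realized as matrices indexed by tuples `Fin k → Fin N`. -/
noncomputable def eop (n N k : ℕ) (j : Fin k) (a b : Fin N) :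
    Matrix (Fin k → Fin N) (Fin k → Fin N) ℂ :=
  fun x y =>
    (if x j = a ∧ y j = b then (1 : ℂ) else 0) *
      (-1 : ℂ) ^ ((par n N a + par n N b) *
        ∑ l ∈ Finset.univ.filter (fun l : Fin k => l < j), par n N (x l)) *
      ∏ l ∈ Finset.univ.filter (fun l : Fin k => l ≠ j),
        (if x l = y l then (1 : ℂ) else 0)

/-- `E_{ab} = ∑_{j=1}^k e^{(j)}_{ab}`. -/
noncomputable def Egen (n N k : ℕ) (a b : Fin N) : Matrix (Fin k → Fin N) (Fin k → Fin N) ℂ :=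
  ∑ j : Fin k, eop n N k j a b

/-- The graded permutation `P_{ij} = ∑_{a,b} (−1)^{p(b)} e^{(i)}_{ab} e^{(j)}_{ba}`. -/
noncomputable def Pg (n N k : ℕ) (i j : Fin k) : Matrix (Fin k → Fin N) (Fin k → Fin N) ℂ :=
  ∑ a : Fin N, ∑ b : Fin N,
    ((-1 : ℂ) ^ par n N b) • (eop n N k i a b * eop n N k j b a)

/-- Commutator. -/
def comm {α : Type*} [Ring α] (X Y : α) : α := X * Y - Y * X

/-- Anticommutator. -/
def acomm {α : Type*} [Ring α] (X Y : α) : α := X * Y + Y * X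

/-- The dynamical connection matrix
`A_a = ∑_j z_j e^{(j)}_{aa} + ∑_{b ≠ a} (−1)^{p(b)} (E_{ab}E_{ba} − E_{aa})/(λ_a − λ_b)`. -/
noncomputable def dynA (n N k : ℕ) (z : Fin k → ℂ) (lam : Fin N → ℂ) (a : Fin N) :
    Matrix (Fin k → Fin N) (Fin k → Fin N) ℂ :=
  (∑ j : Fin k, z j • eop n N k j a a) +
    ∑ b ∈ Finset.univ.filter (fun b : Fin N => b ≠ a),
      (((-1 : ℂ) ^ par n N b) / (lam a - lam b)) •
        (Egen n N k a b * Egen n N k b a - Egen n N k a a)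

/-- The (twisted) KZ connection matrix
`B_i = ∑_c λ_c e^{(i)}_{cc} + ∑_{j ≠ i} P_{ij}/(z_i − z_j)`. -/
noncomputable def kzB (n N k : ℕ) (z : Fin k → ℂ) (lam : Fin N → ℂ) (i : Fin k) :
    Matrix (Fin k → Fin N) (Fin k → Fin N) ℂ :=
  (∑ c : Fin N, lam c • eop n N k i c c) +
    ∑ j ∈ Finset.univ.filter (fun j : Fin k => j ≠ i),
      ((z i - z j)⁻¹) • Pg n N k i j

/-- Adjacent graded permutation `P_{s_l} = P_{l,l+1}` (0-based slots). -/
noncomputable def Ps (n N k : ℕ) (l : ℕ) (h : l + 1 < k) :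
    Matrix (Fin k → Fin N) (Fin k → Fin N) ℂ :=
  Pg n N k ⟨l, Nat.lt_of_succ_lt h⟩ ⟨l + 1, h⟩

/-- The highest-configuration vector `e_1 ⊗ ⋯ ⊗ e_N ∈ (ℂ^N)^{⊗N}`. -/
noncomputable def baseVec (N : ℕ) : (Fin N → Fin N) → ℂ :=
  fun x => if x = (fun j => j) then 1 else 0

/-- `Ω^i = ∑_{σ ∈ S_N} (−1)^{i·ℓ(σ)} P_σ (e_1 ⊗ ⋯ ⊗ e_N)`, where `P_σ = ρ σ` for the
(unique) multiplicative extension `ρ` of the adjacent graded permutations. -/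
noncomputable def OmegaVec (N : ℕ) (i : ℕ)
    (ρ : Equiv.Perm (Fin N) →* Matrix (Fin N → Fin N) (Fin N → Fin N) ℂ) :
    (Fin N → Fin N) → ℂ :=
  ∑ σ : Equiv.Perm (Fin N),
    (((Equiv.Perm.sign σ : ℤ) : ℂ) ^ i) • Matrix.mulVec (ρ σ) (baseVec N)

/-- The set of `(z, λ)` with pairwise distinct `z`'s and pairwise distinct `λ`'s. -/
def Usep (N : ℕ) : Set ((Fin N → ℂ) × (Fin N → ℂ)) :=
  {p | (∀ i j : Fin N, i ≠ j → p.1 i ≠ p.1 j) ∧ (∀ a b : Fin N, a ≠ b → p.2 a ≠ p.2 b)}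

end Glnm

namespace Glnm

section Lemmas
variable {n N k : ℕ}

def Ssum (n N k : ℕ) (j : Fin k) (x : Fin k → Fin N) : ℕ :=
  ∑ l ∈ Finset.univ.filter (fun l : Fin k => l < j), par n N (x l)

lemma eop_def (j : Fin k) (a b : Fin N) (x y : Fin k → Fin N) :
    eop n N k j a b x y =
      (if x j = a ∧ y j = b then (1 : ℂ) else 0) *
        (-1 : ℂ) ^ ((par n N a + par n N b) * Ssum n N k j x) *
        ∏ l ∈ Finset.univ.filter (fun l : Fin k => l ≠ j),
          (if x l = y l then (1 : ℂ) else 0) := rfl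

lemma neg_one_pow_congr {e f : ℕ} (h : e % 2 = f % 2) : ((-1 : ℂ)) ^ e = (-1) ^ f := by
  conv_lhs => rw [← Nat.div_add_mod e 2]
  conv_rhs => rw [← Nat.div_add_mod f 2]
  rw [pow_add, pow_add, pow_mul, pow_mul, neg_one_sq, one_pow, one_pow, h]

lemma Ssum_update_of_le {j i : Fin k} (h : ¬ j < i) (x : Fin k → Fin N) (v : Fin N) :
    Ssum n N k i (Function.update x j v) = Ssum n N k i x := by
  apply Finset.sum_congr rfl
  intro l hl
  simp only [Finset.mem_filter] at hl
  rw [Function.update_of_ne]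
  intro hlj; exact h (hlj ▸ hl.2)

lemma Ssum_update_of_lt {j i : Fin k} (h : j < i) (x : Fin k → Fin N) (v : Fin N) :
    Ssum n N k i (Function.update x j v) + par n N (x j) = Ssum n N k i x + par n N v := by
  unfold Ssum
  have hj : j ∈ Finset.univ.filter (fun l : Fin k => l < i) := by simp [h]
  rw [← Finset.add_sum_erase _ _ hj, ← Finset.add_sum_erase _ (fun l => par n N (x l)) hj]
  have : ∑ l ∈ (Finset.univ.filter (fun l : Fin k => l < i)).erase j,
      par n N (Function.update x j v l) = ∑ l ∈ (Finset.univ.filter (fun l : Fin k => l < i)).erase j,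
      par n N (x l) := by
    apply Finset.sum_congr rfl
    intro l hl
    rw [Function.update_of_ne (Finset.ne_of_mem_erase hl)]
  rw [this, Function.update_self]
  ring

lemma eop_mul_apply (j : Fin k) (a b : Fin N) (M : Matrix (Fin k → Fin N) (Fin k → Fin N) ℂ)
    (x y : Fin k → Fin N) :
    (eop n N k j a b * M) x y =
      if x j = a then
        ((-1 : ℂ) ^ ((par n N a + par n N b) * Ssum n N k j x)) * M (Function.update x j b) y
      else 0 := by
  rw [Matrix.mul_apply]
  rw [Fintype.sum_eq_single (Function.update x j b)]
  · have hprod : ∏ l ∈ Finset.univ.filter (fun l : Fin k => l ≠ j),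
        (if x l = Function.update x j b l then (1:ℂ) else 0) = 1 := by
      apply Finset.prod_eq_one
      intro l hl
      simp only [Finset.mem_filter] at hl
      rw [Function.update_of_ne hl.2, if_pos rfl]
    by_cases h : x j = a
    · simp [eop, hprod, h, Ssum]
    · simp [eop, h]
  · intro z hz
    have : ¬ (z j = b) ∨ ∃ l, l ≠ j ∧ ¬ (x l = z l) := by
      by_contra hcon
      push_neg at hcon
      apply hz
      funext l
      by_cases hl : l = j
      · subst hl; rw [Function.update_self, hcon.1]
      · rw [Function.update_of_ne hl, ← hcon.2 l hl]
    rcases this with h | ⟨l, hl, hxl⟩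
    · simp [eop, h]
    · have : ∏ l' ∈ Finset.univ.filter (fun l' : Fin k => l' ≠ j),
          (if x l' = z l' then (1:ℂ) else 0) = 0 := by
        apply Finset.prod_eq_zero (i := l) (by simp [hl])
        rw [if_neg hxl]
      simp [eop, this]

lemma sign_collapse (pa pb pd S : ℕ) :
    ((-1:ℂ))^((pa+pb)*S) * (-1)^((pb+pd)*S) = (-1)^((pa+pd)*S) := by
  rw [← pow_add]
  apply neg_one_pow_congr
  have h : (pa+pb)*S + (pb+pd)*S = (pa+pd)*S + 2*(pb*S) := by ring
  rw [h, Nat.add_mul_mod_self_left]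

/-- C1: same-slot product. -/
lemma eop_mul_eop_same (j : Fin k) (a b c d : Fin N) :
    eop n N k j a b * eop n N k j c d = if b = c then eop n N k j a d else 0 := by
  ext x y
  rw [eop_mul_apply]
  have hprod : ∏ l ∈ Finset.univ.filter (fun l : Fin k => l ≠ j),
      (if Function.update x j b l = y l then (1:ℂ) else 0)
      = ∏ l ∈ Finset.univ.filter (fun l : Fin k => l ≠ j), (if x l = y l then (1:ℂ) else 0) := by
    apply Finset.prod_congr rfl
    intro l hl
    simp only [Finset.mem_filter] at hl
    rw [Function.update_of_ne hl.2]
  by_cases hbc : b = c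
  · subst hbc
    by_cases hxa : x j = a
    · rw [if_pos hxa, if_pos rfl, eop_def, eop_def, Function.update_self,
        Ssum_update_of_le (lt_irrefl j) x b, hprod]
      by_cases hyd : y j = d
      · simp only [hxa, hyd, and_self, if_true, one_mul]
        have hs := sign_collapse (par n N a) (par n N b) (par n N d) (Ssum n N k j x)
        set Q := ∏ l ∈ Finset.univ.filter (fun l : Fin k => l ≠ j),
          (if x l = y l then (1:ℂ) else 0)
        linear_combination Q * hs
      · simp [hyd]
    · rw [if_neg hxa, if_pos rfl, eop_def, if_neg (by tauto), zero_mul, zero_mul]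
  · rw [if_neg hbc]
    by_cases hxa : x j = a
    · rw [if_pos hxa, eop_def, Function.update_self, if_neg (by tauto)]
      simp
    · simp [hxa]


lemma sign_swap_key1 (u pa pb Si Sj A : ℕ) (h : A + pa = Sj + pb) :
    ((-1:ℂ))^((pa+pb)*Si + u*A) = (-1)^((pa+pb)*u + (u*Sj + (pa+pb)*Si)) := by
  apply neg_one_pow_congr
  have h2 : u*A + u*pa = u*Sj + u*pb := by
    rw [← Nat.left_distrib, ← Nat.left_distrib, h]
  have h3 : (pa+pb)*u = u*pa + u*pb := by ring
  rw [h3]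
  set X := u*A with hX
  set Y := u*pa with hY
  set Z := u*Sj with hZ
  set W := u*pb with hW
  set V := (pa+pb)*Si with hV
  omega

lemma sign_swap_key2 (v pc pd Si Sj B : ℕ) (h : B + pc = Si + pd) :
    ((-1:ℂ))^(v*Si + (pc+pd)*Sj) = (-1)^(v*(pc+pd) + ((pc+pd)*Sj + v*B)) := by
  apply neg_one_pow_congr
  have h2 : v*B + v*pc = v*Si + v*pd := by
    rw [← Nat.left_distrib, ← Nat.left_distrib, h]
  have h3 : v*(pc+pd) = v*pc + v*pd := by ring
  rw [h3]
  set X := v*B with hX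
  set Y := v*pc with hY
  set Z := v*Si with hZ
  set W := v*pd with hW
  set V := (pc+pd)*Sj with hV
  omega

lemma filter_erase_eq (i j : Fin k) :
    (Finset.univ.filter (fun l : Fin k => l ≠ j)).erase i
      = Finset.univ.filter (fun l : Fin k => l ≠ i ∧ l ≠ j) := by
  ext l; simp [Finset.mem_erase]

lemma filter_erase_eq' (i j : Fin k) :
    (Finset.univ.filter (fun l : Fin k => l ≠ i)).erase j
      = Finset.univ.filter (fun l : Fin k => l ≠ i ∧ l ≠ j) := by
  ext l; simp [Finset.mem_erase]; tauto

/-- C2: distinct slots supercommute. -/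
lemma eop_mul_eop_swap {i j : Fin k} (hij : i ≠ j) (a b c d : Fin N) :
    eop n N k i a b * eop n N k j c d =
      ((-1:ℂ) ^ ((par n N a + par n N b) * (par n N c + par n N d))) •
        (eop n N k j c d * eop n N k i a b) := by
  ext x y
  rw [Matrix.smul_apply, eop_mul_apply, eop_mul_apply, smul_eq_mul]
  have hP1 : ∏ l ∈ Finset.univ.filter (fun l : Fin k => l ≠ j),
      (if Function.update x i b l = y l then (1:ℂ) else 0)
      = (if y i = b then (1:ℂ) else 0) *
        ∏ l ∈ Finset.univ.filter (fun l : Fin k => l ≠ i ∧ l ≠ j),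
          (if x l = y l then (1:ℂ) else 0) := by
    rw [← Finset.mul_prod_erase _ _ (show i ∈ Finset.univ.filter (fun l : Fin k => l ≠ j) by simp [hij]),
      filter_erase_eq]
    congr 1
    · rw [Function.update_self]; exact if_congr eq_comm rfl rfl
    · apply Finset.prod_congr rfl
      intro l hl
      simp only [Finset.mem_filter] at hl
      rw [Function.update_of_ne hl.2.1]
  have hP2 : ∏ l ∈ Finset.univ.filter (fun l : Fin k => l ≠ i),
      (if Function.update x j d l = y l then (1:ℂ) else 0)
      = (if y j = d then (1:ℂ) else 0) *
        ∏ l ∈ Finset.univ.filter (fun l : Fin k => l ≠ i ∧ l ≠ j),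
          (if x l = y l then (1:ℂ) else 0) := by
    rw [← Finset.mul_prod_erase _ _ (show j ∈ Finset.univ.filter (fun l : Fin k => l ≠ i) by simp [Ne.symm hij]),
      filter_erase_eq']
    congr 1
    · rw [Function.update_self]; exact if_congr eq_comm rfl rfl
    · apply Finset.prod_congr rfl
      intro l hl
      simp only [Finset.mem_filter] at hl
      rw [Function.update_of_ne hl.2.2]
  rw [eop_def, eop_def, hP1, hP2, Function.update_of_ne (Ne.symm hij), Function.update_of_ne hij]
  by_cases hxi : x i = a
  swap
  · simp [hxi]
  by_cases hxj : x j = c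
  swap
  · simp [hxi, hxj]
  by_cases hyi : y i = b
  swap
  · simp [hxi, hxj, hyi]
  by_cases hyj : y j = d
  swap
  · simp [hxi, hxj, hyi, hyj]
  simp only [hxi, hxj, hyi, hyj, and_self, if_true, if_pos, one_mul, mul_one]
  set Q := ∏ l ∈ Finset.univ.filter (fun l : Fin k => l ≠ i ∧ l ≠ j),
      (if x l = y l then (1:ℂ) else 0) with hQ
  have hsign : ((-1:ℂ))^((par n N a + par n N b) * Ssum n N k i x
        + (par n N c + par n N d) * Ssum n N k j (Function.update x i b))
      = (-1)^((par n N a + par n N b) * (par n N c + par n N d)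
        + ((par n N c + par n N d) * Ssum n N k j x
          + (par n N a + par n N b) * Ssum n N k i (Function.update x j d))) := by
    rcases lt_or_gt_of_ne hij with h | h
    · rw [Ssum_update_of_le (not_lt_of_gt h) x d]
      have hrel := Ssum_update_of_lt (n := n) (h := h) x b
      rw [hxi] at hrel
      exact sign_swap_key1 (par n N c + par n N d) (par n N a) (par n N b) _ _ _ hrel
    · rw [Ssum_update_of_le (not_lt_of_gt h) x b]
      have hrel := Ssum_update_of_lt (n := n) (h := h) x d
      rw [hxj] at hrel
      exact sign_swap_key2 (par n N a + par n N b) (par n N c) (par n N d) _ _ _ hrel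
  rw [pow_add, pow_add, pow_add] at hsign
  linear_combination Q * hsign


lemma sum_sum_split {M : Type*} [AddCommMonoid M] (F : Fin k → Fin k → M) :
    ∑ i : Fin k, ∑ j : Fin k, F i j
      = ∑ i : Fin k, F i i + ∑ i : Fin k, ∑ j ∈ Finset.univ.erase i, F i j := by
  rw [← Finset.sum_add_distrib]
  apply Finset.sum_congr rfl
  intro i _
  rw [Finset.add_sum_erase _ _ (Finset.mem_univ i)]

lemma sum_erase_comm {M : Type*} [AddCommMonoid M] (G : Fin k → Fin k → M) :
    ∑ i : Fin k, ∑ j ∈ Finset.univ.erase i, G i j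
      = ∑ j : Fin k, ∑ i ∈ Finset.univ.erase j, G i j := by
  apply Finset.sum_comm'
  intro x y
  simp only [Finset.mem_erase, Finset.mem_univ, and_true, true_and]
  exact ⟨fun h => (Ne.symm h), fun h => (Ne.symm h)⟩

lemma diag_sum (a b c d : Fin N) :
    ∑ i : Fin k, eop n N k i a b * eop n N k i c d
      = if b = c then Egen n N k a d else 0 := by
  unfold Egen
  split_ifs with h <;> simp [eop_mul_eop_same, h]

lemma offdiag_sum (a b c d : Fin N) :
    ∑ i : Fin k, ∑ j ∈ Finset.univ.erase i, eop n N k i a b * eop n N k j c d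
      = Egen n N k a b * Egen n N k c d - (if b = c then Egen n N k a d else 0) := by
  unfold Egen
  rw [Finset.sum_mul_sum, sum_sum_split]
  rw [show (∑ i : Fin k, eop n N k i a b * eop n N k i c d) = _ from diag_sum a b c d]
  unfold Egen
  abel

/-- The super commutation relation for the `Egen`. -/
lemma Egen_mul (a b c d : Fin N) :
    Egen n N k a b * Egen n N k c d
      = (if b = c then Egen n N k a d else 0)
        + ((-1:ℂ)^((par n N a + par n N b)*(par n N c + par n N d))) •
            (Egen n N k c d * Egen n N k a b
             - (if d = a then Egen n N k c b else 0)) := by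
  set s : ℂ := ((-1:ℂ)^((par n N a + par n N b)*(par n N c + par n N d))) with hs
  have step1 : Egen n N k a b * Egen n N k c d
      = (if b = c then Egen n N k a d else 0)
        + ∑ i : Fin k, ∑ j ∈ Finset.univ.erase i, eop n N k i a b * eop n N k j c d := by
    rw [offdiag_sum]; abel
  rw [step1]
  congr 1
  have swap : ∑ i : Fin k, ∑ j ∈ Finset.univ.erase i, eop n N k i a b * eop n N k j c d
      = s • ∑ i : Fin k, ∑ j ∈ Finset.univ.erase i, eop n N k j c d * eop n N k i a b := by
    rw [Finset.smul_sum]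
    apply Finset.sum_congr rfl
    intro i _
    rw [Finset.smul_sum]
    apply Finset.sum_congr rfl
    intro j hj
    have hij : i ≠ j := Ne.symm (Finset.ne_of_mem_erase hj)
    rw [eop_mul_eop_swap hij]
  rw [swap]
  congr 1
  exact (sum_erase_comm (fun i j => eop n N k j c d * eop n N k i a b)).trans
    (offdiag_sum c d a b)


end Lemmas

section Key
variable {R : Type*} [Ring R] [Module ℂ R] [SMulCommClass ℂ R R] [IsScalarTower ℂ R R]

lemma comm_eq_zero_of_commute {X Y : R} (h : Commute X Y) : comm X Y = 0 := by
  simp [comm, h.eq]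

lemma comm_self (X : R) : comm X X = 0 := by simp [comm]

lemma comm_swap (X Y : R) : comm X Y = -comm Y X := by simp [comm]

lemma comm_add_left (X Y Z : R) : comm (X + Y) Z = comm X Z + comm Y Z := by
  simp only [comm, add_mul, mul_add]; abel

lemma comm_add_right (X Y Z : R) : comm X (Y + Z) = comm X Y + comm X Z := by
  simp only [comm, add_mul, mul_add]; abel

lemma comm_smul_left (c : ℂ) (X Y : R) : comm (c • X) Y = c • comm X Y := by
  simp only [comm, smul_mul_assoc, mul_smul_comm, smul_sub]

lemma comm_smul_right (c : ℂ) (X Y : R) : comm X (c • Y) = c • comm X Y := by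
  simp only [comm, smul_mul_assoc, mul_smul_comm, smul_sub]

lemma comm_sum_left {ι : Type*} (s : Finset ι) (f : ι → R) (Y : R) :
    comm (∑ i ∈ s, f i) Y = ∑ i ∈ s, comm (f i) Y := by
  simp only [comm, Finset.sum_mul, Finset.mul_sum, ← Finset.sum_sub_distrib]

lemma comm_sum_right {ι : Type*} (s : Finset ι) (f : ι → R) (Y : R) :
    comm Y (∑ i ∈ s, f i) = ∑ i ∈ s, comm Y (f i) := by
  simp only [comm, Finset.sum_mul, Finset.mul_sum, ← Finset.sum_sub_distrib]

lemma key (s t : ℂ) (hs : s*s = 1) (ht : t*t = 1)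
    (A A' B B' C C' Ha Hb : R)
    (hA'B : A'*B = s•(B*A') + C)
    (hA'B' : A'*B' = s•(B'*A'))
    (hAB : A*B = s•(B*A))
    (hAB' : A*B' = s•(B'*A) - s•C')
    (hAC : A*C = t•(C*A) + B)
    (hAC' : A*C' = t•(C'*A))
    (hA'C : A'*C = t•(C*A'))
    (hA'C' : A'*C' = t•(C'*A') - t•B')
    (hHaA : Ha*A = A*Ha + A)
    (hHaA' : Ha*A' = A'*Ha - A')
    (hHbA : Hb*A = A*Hb - A)
    (hHbA' : Hb*A' = A'*Hb + A')
    (hHaB : Ha*B = B*Ha + B)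
    (hHaB' : Ha*B' = B'*Ha - B')
    (hHaC : Ha*C = C*Ha)
    (hHaC' : Ha*C' = C'*Ha)
    (hHaHb : Ha*Hb = Hb*Ha) :
    comm (A*A' - Ha) ((B*B' - Ha) + (C*C' - Hb)) = 0 := by
  have e1 : A' * (B * B') = B*(B'*A') + C*B' := by
    calc A' * (B*B') = (A'*B)*B' := by rw [mul_assoc]
    _ = s•(B*(A'*B')) + C*B' := by rw [hA'B, add_mul, smul_mul_assoc, mul_assoc]
    _ = s•(B*(s•(B'*A'))) + C*B' := by rw [hA'B']
    _ = B*(B'*A') + C*B' := by rw [mul_smul_comm, smul_smul, hs, one_smul]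
  have e3 : A * (C * B') = (s*t)•(C*(B'*A)) - (s*t)•(C*C') + B*B' := by
    calc A*(C*B') = (A*C)*B' := by rw [mul_assoc]
    _ = t•(C*(A*B')) + B*B' := by rw [hAC, add_mul, smul_mul_assoc, mul_assoc]
    _ = t•(C*(s•(B'*A) - s•C')) + B*B' := by rw [hAB']
    _ = (s*t)•(C*(B'*A)) - (s*t)•(C*C') + B*B' := by
        rw [mul_sub, mul_smul_comm, mul_smul_comm, smul_sub, smul_smul, smul_smul,
          mul_comm t s]
  have e4 : A*(B*(B'*A')) = B*(B'*(A*A')) - B*(C'*A') := by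
    calc A*(B*(B'*A')) = (A*B)*(B'*A') := by rw [mul_assoc]
    _ = s•(B*(A*(B'*A'))) := by rw [hAB, smul_mul_assoc, mul_assoc]
    _ = s•(B*((A*B')*A')) := by rw [← mul_assoc A B' A']
    _ = s•(B*((s•(B'*A) - s•C')*A')) := by rw [hAB']
    _ = s•(B*(s•(B'*(A*A')) - s•(C'*A'))) := by
        rw [sub_mul, smul_mul_assoc, smul_mul_assoc, mul_assoc]
    _ = B*(B'*(A*A')) - B*(C'*A') := by
        rw [mul_sub, mul_smul_comm, mul_smul_comm, smul_sub, smul_smul, smul_smul, hs,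
          one_smul, one_smul]
  have eBB : (A*A')*(B*B')
      = B*(B'*(A*A')) - B*(C'*A') + ((s*t)•(C*(B'*A)) - (s*t)•(C*C') + B*B') := by
    calc (A*A')*(B*B') = A*(A'*(B*B')) := by rw [mul_assoc]
    _ = A*(B*(B'*A')) + A*(C*B') := by rw [e1, mul_add, ← mul_assoc A C B']
    _ = _ := by rw [e4, e3]
  have f1 : A' * (C * C') = C*(C'*A') - C*B' := by
    calc A' * (C*C') = (A'*C)*C' := by rw [mul_assoc]
    _ = t•(C*(A'*C')) := by rw [hA'C, smul_mul_assoc, mul_assoc]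
    _ = t•(C*(t•(C'*A') - t•B')) := by rw [hA'C']
    _ = C*(C'*A') - C*B' := by
        rw [mul_sub, mul_smul_comm, mul_smul_comm, smul_sub, smul_smul, smul_smul, ht,
          one_smul, one_smul]
  have f4 : A*(C*(C'*A')) = C*(C'*(A*A')) + B*(C'*A') := by
    calc A*(C*(C'*A')) = (A*C)*(C'*A') := by rw [mul_assoc]
    _ = t•(C*(A*(C'*A'))) + B*(C'*A') := by rw [hAC, add_mul, smul_mul_assoc, mul_assoc]
    _ = t•(C*((A*C')*A')) + B*(C'*A') := by rw [← mul_assoc A C' A']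
    _ = t•(C*(t•(C'*(A*A')))) + B*(C'*A') := by rw [hAC', smul_mul_assoc, mul_assoc]
    _ = C*(C'*(A*A')) + B*(C'*A') := by rw [mul_smul_comm, smul_smul, ht, one_smul]
  have eCC : (A*A')*(C*C')
      = C*(C'*(A*A')) + B*(C'*A') - ((s*t)•(C*(B'*A)) - (s*t)•(C*C') + B*B') := by
    calc (A*A')*(C*C') = A*(A'*(C*C')) := by rw [mul_assoc]
    _ = A*(C*(C'*A')) - A*(C*B') := by rw [f1, mul_sub]
    _ = _ := by rw [f4, e3]
  have g1 : Ha*(A*A') = (A*A')*Ha := by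
    calc Ha*(A*A') = (Ha*A)*A' := by rw [mul_assoc]
    _ = A*(A'*Ha - A') + A*A' := by rw [hHaA, add_mul, mul_assoc, hHaA']
    _ = (A*A')*Ha := by rw [mul_sub, sub_add_cancel, ← mul_assoc]
  have g2 : Hb*(A*A') = (A*A')*Hb := by
    calc Hb*(A*A') = (Hb*A)*A' := by rw [mul_assoc]
    _ = A*(A'*Hb + A') - A*A' := by rw [hHbA, sub_mul, mul_assoc, hHbA']
    _ = (A*A')*Hb := by rw [mul_add, add_sub_cancel_right, ← mul_assoc]
  have g3 : Ha*(B*B') = (B*B')*Ha := by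
    calc Ha*(B*B') = (Ha*B)*B' := by rw [mul_assoc]
    _ = B*(B'*Ha - B') + B*B' := by rw [hHaB, add_mul, mul_assoc, hHaB']
    _ = (B*B')*Ha := by rw [mul_sub, sub_add_cancel, ← mul_assoc]
  have g4 : Ha*(C*C') = (C*C')*Ha := by
    calc Ha*(C*C') = (Ha*C)*C' := by rw [mul_assoc]
    _ = C*(C'*Ha) := by rw [hHaC, mul_assoc, hHaC']
    _ = (C*C')*Ha := by rw [← mul_assoc]
  simp only [comm, mul_sub, sub_mul, mul_add, add_mul]
  rw [eBB, eCC, g1, g2, g3, g4, hHaHb]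
  simp only [mul_assoc]
  module


/-- disjoint-index commutation -/
lemma comm4 (s : ℂ) (hs : s*s = 1) (A A' F F' Ha Hc : R)
    (h1 : A*F = s•(F*A)) (h2 : A*F' = s•(F'*A)) (h3 : A'*F = s•(F*A'))
    (h4 : A'*F' = s•(F'*A'))
    (h5 : A*Hc = Hc*A) (h6 : A'*Hc = Hc*A')
    (h7 : Ha*F = F*Ha) (h8 : Ha*F' = F'*Ha) (h9 : Ha*Hc = Hc*Ha) :
    Commute (A*A' - Ha) (F*F' - Hc) := by
  have k1 : A'*(F*F') = (F*F')*A' := by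
    calc A'*(F*F') = (A'*F)*F' := by rw [mul_assoc]
    _ = s•(F*(A'*F')) := by rw [h3, smul_mul_assoc, mul_assoc]
    _ = s•(F*(s•(F'*A'))) := by rw [h4]
    _ = (F*F')*A' := by rw [mul_smul_comm, smul_smul, hs, one_smul, ← mul_assoc]
  have k2 : A*(F*F') = (F*F')*A := by
    calc A*(F*F') = (A*F)*F' := by rw [mul_assoc]
    _ = s•(F*(A*F')) := by rw [h1, smul_mul_assoc, mul_assoc]
    _ = s•(F*(s•(F'*A))) := by rw [h2]
    _ = (F*F')*A := by rw [mul_smul_comm, smul_smul, hs, one_smul, ← mul_assoc]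
  have k3 : (A*A')*(F*F') = (F*F')*(A*A') := by
    calc (A*A')*(F*F') = A*(A'*(F*F')) := by rw [mul_assoc]
    _ = A*(F*F')*A' := by rw [k1, ← mul_assoc]
    _ = (F*F')*(A*A') := by rw [k2, mul_assoc]
  have k4 : (A*A')*Hc = Hc*(A*A') := by
    calc (A*A')*Hc = A*(Hc*A') := by rw [mul_assoc, h6]
    _ = Hc*(A*A') := by rw [← mul_assoc, h5, mul_assoc]
  have k5 : Ha*(F*F') = (F*F')*Ha := by
    calc Ha*(F*F') = (F*(Ha*F')) := by rw [← mul_assoc, h7, mul_assoc]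
    _ = (F*F')*Ha := by rw [h8, ← mul_assoc]
  unfold Commute SemiconjBy
  simp only [mul_sub, sub_mul]
  rw [k3, k4, k5, h9]
  abel


lemma flat_abstract {ι : Type*} [Fintype ι] [DecidableEq ι]
    (lam : ι → ℂ) (hlam : ∀ a b : ι, a ≠ b → lam a ≠ lam b)
    (D : ι → R) (X : ι → ι → R)
    (hsym : ∀ a b : ι, X a b = X b a)
    (hdisj : ∀ a b c d : ι, a ≠ c → a ≠ d → b ≠ c → b ≠ d → Commute (X a b) (X c d))
    (htri : ∀ a b c : ι, a ≠ b → a ≠ c → b ≠ c →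
      comm (X a b) (X a c) + comm (X a b) (X b c) = 0)
    (hD : ∀ a b : ι, Commute (D a) (D b))
    (hDX : ∀ c a b : ι, c ≠ a → c ≠ b → Commute (D c) (X a b))
    (hDX2 : ∀ a b : ι, a ≠ b → comm (D a) (X a b) + comm (D b) (X a b) = 0)
    (a b : ι) :
    comm (D a + ∑ c ∈ Finset.univ.filter (fun c => c ≠ a), (lam a - lam c)⁻¹ • X a c)
         (D b + ∑ c ∈ Finset.univ.filter (fun c => c ≠ b), (lam b - lam c)⁻¹ • X b c) = 0 := by
  by_cases hab : a = b
  · subst hab; exact comm_self _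
  have hbFa : b ∈ Finset.univ.filter (fun c => c ≠ a) := by simp [Ne.symm hab]
  have haFb : a ∈ Finset.univ.filter (fun c => c ≠ b) := by simp [hab]
  have hErase : (Finset.univ.filter (fun c : ι => c ≠ b)).erase a
      = (Finset.univ.filter (fun c : ι => c ≠ a)).erase b := by
    ext x; simp [Finset.mem_erase]; tauto
  rw [comm_add_left, comm_add_right, comm_add_right]
  -- diagonal-diagonal
  rw [comm_eq_zero_of_commute (hD a b)]
  -- D-S cross terms
  have hSb : comm (D a) (∑ c ∈ Finset.univ.filter (fun c => c ≠ b), (lam b - lam c)⁻¹ • X b c)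
      = (lam b - lam a)⁻¹ • comm (D a) (X a b) := by
    rw [comm_sum_right]
    rw [show (∑ c ∈ Finset.univ.filter (fun c => c ≠ b),
        comm (D a) ((lam b - lam c)⁻¹ • X b c))
        = ∑ c ∈ Finset.univ.filter (fun c => c ≠ b),
          (lam b - lam c)⁻¹ • comm (D a) (X b c) from
      Finset.sum_congr rfl fun c _ => comm_smul_right _ _ _]
    rw [Finset.sum_eq_single_of_mem a haFb]
    · rw [hsym b a]
    · intro d hd hda
      simp only [Finset.mem_filter] at hd
      rw [comm_eq_zero_of_commute (hDX a b d hab (Ne.symm hda)), smul_zero]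
  have hSa : comm (∑ c ∈ Finset.univ.filter (fun c => c ≠ a), (lam a - lam c)⁻¹ • X a c) (D b)
      = (lam a - lam b)⁻¹ • comm (X a b) (D b) := by
    rw [comm_sum_left]
    rw [show (∑ c ∈ Finset.univ.filter (fun c => c ≠ a),
        comm ((lam a - lam c)⁻¹ • X a c) (D b))
        = ∑ c ∈ Finset.univ.filter (fun c => c ≠ a),
          (lam a - lam c)⁻¹ • comm (X a c) (D b) from
      Finset.sum_congr rfl fun c _ => comm_smul_left _ _ _]
    rw [Finset.sum_eq_single_of_mem b hbFa]
    · intro d hd hdb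
      simp only [Finset.mem_filter] at hd
      rw [comm_swap, comm_eq_zero_of_commute (hDX b a d (Ne.symm hab) (Ne.symm hdb)),
        neg_zero, smul_zero]
  -- the double sum
  have hT4 : comm (∑ c ∈ Finset.univ.filter (fun c => c ≠ a), (lam a - lam c)⁻¹ • X a c)
      (∑ c ∈ Finset.univ.filter (fun c => c ≠ b), (lam b - lam c)⁻¹ • X b c) = 0 := by
    have expand : comm (∑ c ∈ Finset.univ.filter (fun c => c ≠ a), (lam a - lam c)⁻¹ • X a c)
        (∑ c ∈ Finset.univ.filter (fun c => c ≠ b), (lam b - lam c)⁻¹ • X b c)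
        = ∑ c ∈ Finset.univ.filter (fun c => c ≠ a), ∑ d ∈ Finset.univ.filter (fun c => c ≠ b),
            ((lam a - lam c)⁻¹ * (lam b - lam d)⁻¹) • comm (X a c) (X b d) := by
      rw [comm_sum_left]
      apply Finset.sum_congr rfl
      intro c _
      rw [comm_smul_left, comm_sum_right, Finset.smul_sum]
      apply Finset.sum_congr rfl
      intro d _
      rw [comm_smul_right, smul_smul]
    rw [expand, ← Finset.add_sum_erase _ _ hbFa]
    -- inner sum at c = b
    rw [← Finset.add_sum_erase _ _ haFb, hsym b a, comm_self, smul_zero, zero_add, hErase]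
    have inner_eq : ∀ c ∈ (Finset.univ.filter (fun c : ι => c ≠ a)).erase b,
        (∑ d ∈ Finset.univ.filter (fun c => c ≠ b),
          ((lam a - lam c)⁻¹ * (lam b - lam d)⁻¹) • comm (X a c) (X b d))
        = ((lam a - lam c)⁻¹ * (lam b - lam a)⁻¹) • comm (X a c) (X a b)
          + ((lam a - lam c)⁻¹ * (lam b - lam c)⁻¹) • comm (X a c) (X b c) := by
      intro c hc
      have hcb : c ≠ b := Finset.ne_of_mem_erase hc
      have hca : c ≠ a := by
        have := Finset.mem_of_mem_erase hc; simp only [Finset.mem_filter] at this; exact this.2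
      rw [← Finset.add_sum_erase _ _ haFb, hsym b a]
      have hcmem : c ∈ (Finset.univ.filter (fun c : ι => c ≠ b)).erase a := by
        simp [Finset.mem_erase, hca, hcb]
      rw [Finset.sum_eq_single_of_mem c hcmem]
      intro d hd hdc
      simp only [Finset.mem_erase, Finset.mem_filter] at hd
      rw [comm_eq_zero_of_commute (hdisj a c b d hab hd.1.symm hcb (Ne.symm hdc)), smul_zero]
    rw [Finset.sum_congr rfl inner_eq, ← Finset.sum_add_distrib]
    apply Finset.sum_eq_zero
    intro c hc
    have hcb : c ≠ b := Finset.ne_of_mem_erase hc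
    have hca : c ≠ a := by
      have := Finset.mem_of_mem_erase hc; simp only [Finset.mem_filter] at this; exact this.2
    -- commutator identities
    have hY1 : comm (X a c) (X a b) = comm (X a b) (X b c) := by
      have h1 := htri a b c hab (Ne.symm hca) (Ne.symm hcb)
      have h2 : comm (X a b) (X a c) = -(comm (X a b) (X b c)) :=
        eq_neg_of_add_eq_zero_left h1
      rw [comm_swap (X a c) (X a b), h2, neg_neg]
    have hY2 : comm (X a c) (X b c) = - comm (X a b) (X b c) := by
      have h1 := htri a c b (Ne.symm hca) hab hcb
      rw [hsym c b] at h1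
      have h2 : comm (X a c) (X b c) = -(comm (X a c) (X a b)) :=
        eq_neg_of_add_eq_zero_right h1
      rw [h2, hY1]
    rw [hY1, hY2]
    have hlab := sub_ne_zero.mpr (hlam a b hab)
    have hlac := sub_ne_zero.mpr (hlam a c (Ne.symm hca))
    have hlbc := sub_ne_zero.mpr (hlam b c (Ne.symm hcb))
    have hlba := sub_ne_zero.mpr (hlam b a (Ne.symm hab))
    have hscal : (lam a - lam b)⁻¹ * (lam b - lam c)⁻¹
        + ((lam a - lam c)⁻¹ * (lam b - lam a)⁻¹
          - (lam a - lam c)⁻¹ * (lam b - lam c)⁻¹) = 0 := by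
      field_simp
      ring
    calc ((lam a - lam b)⁻¹ * (lam b - lam c)⁻¹) • comm (X a b) (X b c)
          + (((lam a - lam c)⁻¹ * (lam b - lam a)⁻¹) • comm (X a b) (X b c)
            + ((lam a - lam c)⁻¹ * (lam b - lam c)⁻¹) • (- comm (X a b) (X b c)))
        = ((lam a - lam b)⁻¹ * (lam b - lam c)⁻¹
            + ((lam a - lam c)⁻¹ * (lam b - lam a)⁻¹
              - (lam a - lam c)⁻¹ * (lam b - lam c)⁻¹)) • comm (X a b) (X b c) := by
          module
      _ = 0 := by rw [hscal, zero_smul]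
  rw [hSb, hSa, hT4]
  have hinv : (lam b - lam a)⁻¹ = -(lam a - lam b)⁻¹ := by
    rw [show lam b - lam a = -(lam a - lam b) from (neg_sub _ _).symm, inv_neg]
  have hflip : comm (X a b) (D b) = - comm (D b) (X a b) := comm_swap _ _
  have h2 : comm (D b) (X a b) = - comm (D a) (X a b) :=
    eq_neg_of_add_eq_zero_right (hDX2 a b hab)
  rw [hinv, hflip, h2, neg_neg]
  module
end Key


section Concrete
variable {n N k : ℕ}

lemma neg_one_pow_sq (e : ℕ) : ((-1 : ℂ)) ^ e * (-1) ^ e = 1 := by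
  rw [← pow_add, show e + e = 2 * e from by ring, pow_mul, neg_one_sq, one_pow]

lemma neg_one_pow_ss (x y : ℕ) : ((-1 : ℂ)) ^ ((x + x) * y) = 1 := by
  rw [show (x + x) * y = 2 * (x * y) from by ring, pow_mul, neg_one_sq, one_pow]

lemma neg_one_pow_ss' (x y : ℕ) : ((-1 : ℂ)) ^ (x * (y + y)) = 1 := by
  rw [show x * (y + y) = 2 * (x * y) from by ring, pow_mul, neg_one_sq, one_pow]

lemma neg_one_pow_mul_self (e : ℕ) : ((-1 : ℂ)) ^ (e * e) = (-1) ^ e := by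
  rcases Nat.even_or_odd e with h | h
  · rw [h.neg_one_pow, (h.mul_right e).neg_one_pow]
  · rw [h.neg_one_pow, (h.mul h).neg_one_pow]

lemma Egen_mul_free {a b c d : Fin N} (h1 : b ≠ c) (h2 : d ≠ a) :
    Egen n N k a b * Egen n N k c d
      = ((-1:ℂ)^((par n N a + par n N b)*(par n N c + par n N d))) •
          (Egen n N k c d * Egen n N k a b) := by
  rw [Egen_mul a b c d, if_neg h1, if_neg h2, sub_zero, zero_add]

lemma Egen_mul_delta1 {a b c d : Fin N} (h1 : b = c) (h2 : d ≠ a) :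
    Egen n N k a b * Egen n N k c d
      = ((-1:ℂ)^((par n N a + par n N b)*(par n N c + par n N d))) •
          (Egen n N k c d * Egen n N k a b) + Egen n N k a d := by
  rw [Egen_mul a b c d, if_pos h1, if_neg h2, sub_zero, add_comm]

lemma Egen_mul_delta2 {a b c d : Fin N} (h1 : b ≠ c) (h2 : d = a) :
    Egen n N k a b * Egen n N k c d
      = ((-1:ℂ)^((par n N a + par n N b)*(par n N c + par n N d))) •
          (Egen n N k c d * Egen n N k a b)
        - ((-1:ℂ)^((par n N a + par n N b)*(par n N c + par n N d))) • Egen n N k c b := by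
  rw [Egen_mul a b c d, if_neg h1, if_pos h2, zero_add, smul_sub]

/-- diagonal part of the dynamical connection -/
noncomputable def Dop (n N k : ℕ) (z : Fin k → ℂ) (a : Fin N) :
    Matrix (Fin k → Fin N) (Fin k → Fin N) ℂ :=
  ∑ j : Fin k, z j • eop n N k j a a

/-- signed quadratic part -/
noncomputable def Xop (n N k : ℕ) (a b : Fin N) :
    Matrix (Fin k → Fin N) (Fin k → Fin N) ℂ :=
  ((-1 : ℂ) ^ par n N b) • (Egen n N k a b * Egen n N k b a - Egen n N k a a)

lemma hsym_concrete (a b : Fin N) : Xop n N k a b = Xop n N k b a := by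
  by_cases hab : a = b
  · subst hab; rfl
  · unfold Xop
    have h := Egen_mul (n := n) (N := N) (k := k) a b b a
    rw [if_pos rfl, if_pos rfl] at h
    have hW : Egen n N k a b * Egen n N k b a - Egen n N k a a
        = ((-1:ℂ)^((par n N a + par n N b)*(par n N b + par n N a))) •
            (Egen n N k b a * Egen n N k a b - Egen n N k b b) := by
      rw [h]; abel
    rw [hW, smul_smul]
    congr 1
    rw [show (par n N a + par n N b)*(par n N b + par n N a)
        = (par n N a + par n N b)*(par n N a + par n N b) from by ring,
      neg_one_pow_mul_self, ← pow_add]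
    exact neg_one_pow_congr (by omega)

lemma hdisj_concrete (a b c d : Fin N) (h1 : a ≠ c) (h2 : a ≠ d) (h3 : b ≠ c) (h4 : b ≠ d) :
    Commute (Xop n N k a b) (Xop n N k c d) := by
  unfold Xop
  apply Commute.smul_left
  apply Commute.smul_right
  apply comm4 ((-1:ℂ)^((par n N a + par n N b)*(par n N c + par n N d))) (neg_one_pow_sq _)
  · exact Egen_mul_free h3 (Ne.symm h2)
  · rw [Egen_mul_free h4 (Ne.symm h1), add_comm (par n N d) (par n N c)]
  · rw [Egen_mul_free h1 (Ne.symm h4), add_comm (par n N b) (par n N a)]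
  · rw [Egen_mul_free h2 (Ne.symm h3), add_comm (par n N b) (par n N a),
      add_comm (par n N d) (par n N c)]
  · rw [Egen_mul_free h3 (Ne.symm h1), neg_one_pow_ss', one_smul]
  · rw [Egen_mul_free h1 (Ne.symm h3), neg_one_pow_ss', one_smul]
  · rw [Egen_mul_free h1 (Ne.symm h2), neg_one_pow_ss, one_smul]
  · rw [Egen_mul_free h2 (Ne.symm h1), neg_one_pow_ss, one_smul]
  · rw [Egen_mul_free h1 (Ne.symm h1), neg_one_pow_ss, one_smul]

lemma htri_concrete (a b c : Fin N) (hab : a ≠ b) (hac : a ≠ c) (hbc : b ≠ c) :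
    comm (Xop n N k a b) (Xop n N k a c) + comm (Xop n N k a b) (Xop n N k b c) = 0 := by
  have hs : ((-1:ℂ)^((par n N a + par n N b)*(par n N a + par n N c)))
      * ((-1:ℂ)^((par n N a + par n N b)*(par n N a + par n N c))) = 1 := neg_one_pow_sq _
  have ht : ((-1:ℂ)^((par n N a + par n N b)*(par n N b + par n N c)))
      * ((-1:ℂ)^((par n N a + par n N b)*(par n N b + par n N c))) = 1 := neg_one_pow_sq _
  have hA'B : Egen n N k b a * Egen n N k a c
      = ((-1:ℂ)^((par n N a + par n N b)*(par n N a + par n N c))) •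
          (Egen n N k a c * Egen n N k b a) + Egen n N k b c := by
    rw [Egen_mul_delta1 rfl (Ne.symm hbc), add_comm (par n N b) (par n N a)]
  have hA'B' : Egen n N k b a * Egen n N k c a
      = ((-1:ℂ)^((par n N a + par n N b)*(par n N a + par n N c))) •
          (Egen n N k c a * Egen n N k b a) := by
    rw [Egen_mul_free hac hab, add_comm (par n N b) (par n N a),
      add_comm (par n N c) (par n N a)]
  have hAB : Egen n N k a b * Egen n N k a c
      = ((-1:ℂ)^((par n N a + par n N b)*(par n N a + par n N c))) •
          (Egen n N k a c * Egen n N k a b) := by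
    rw [Egen_mul_free (Ne.symm hab) (Ne.symm hac)]
  have hAB' : Egen n N k a b * Egen n N k c a
      = ((-1:ℂ)^((par n N a + par n N b)*(par n N a + par n N c))) •
          (Egen n N k c a * Egen n N k a b)
        - ((-1:ℂ)^((par n N a + par n N b)*(par n N a + par n N c))) • Egen n N k c b := by
    rw [Egen_mul_delta2 hbc rfl, add_comm (par n N c) (par n N a)]
  have hAC : Egen n N k a b * Egen n N k b c
      = ((-1:ℂ)^((par n N a + par n N b)*(par n N b + par n N c))) •
          (Egen n N k b c * Egen n N k a b) + Egen n N k a c := by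
    rw [Egen_mul_delta1 rfl (Ne.symm hac)]
  have hAC' : Egen n N k a b * Egen n N k c b
      = ((-1:ℂ)^((par n N a + par n N b)*(par n N b + par n N c))) •
          (Egen n N k c b * Egen n N k a b) := by
    rw [Egen_mul_free hbc (Ne.symm hab), add_comm (par n N c) (par n N b)]
  have hA'C : Egen n N k b a * Egen n N k b c
      = ((-1:ℂ)^((par n N a + par n N b)*(par n N b + par n N c))) •
          (Egen n N k b c * Egen n N k b a) := by
    rw [Egen_mul_free hab (Ne.symm hbc), add_comm (par n N b) (par n N a)]
  have hA'C' : Egen n N k b a * Egen n N k c b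
      = ((-1:ℂ)^((par n N a + par n N b)*(par n N b + par n N c))) •
          (Egen n N k c b * Egen n N k b a)
        - ((-1:ℂ)^((par n N a + par n N b)*(par n N b + par n N c))) • Egen n N k c a := by
    rw [Egen_mul_delta2 hac rfl, add_comm (par n N b) (par n N a),
      add_comm (par n N c) (par n N b)]
  have hHaA : Egen n N k a a * Egen n N k a b
      = Egen n N k a b * Egen n N k a a + Egen n N k a b := by
    rw [Egen_mul_delta1 rfl (Ne.symm hab), neg_one_pow_ss, one_smul]
  have hHaA' : Egen n N k a a * Egen n N k b a
      = Egen n N k b a * Egen n N k a a - Egen n N k b a := by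
    rw [Egen_mul_delta2 hab rfl, neg_one_pow_ss, one_smul, one_smul]
  have hHbA : Egen n N k b b * Egen n N k a b
      = Egen n N k a b * Egen n N k b b - Egen n N k a b := by
    rw [Egen_mul_delta2 (Ne.symm hab) rfl, neg_one_pow_ss, one_smul, one_smul]
  have hHbA' : Egen n N k b b * Egen n N k b a
      = Egen n N k b a * Egen n N k b b + Egen n N k b a := by
    rw [Egen_mul_delta1 rfl hab, neg_one_pow_ss, one_smul]
  have hHaB : Egen n N k a a * Egen n N k a c
      = Egen n N k a c * Egen n N k a a + Egen n N k a c := by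
    rw [Egen_mul_delta1 rfl (Ne.symm hac), neg_one_pow_ss, one_smul]
  have hHaB' : Egen n N k a a * Egen n N k c a
      = Egen n N k c a * Egen n N k a a - Egen n N k c a := by
    rw [Egen_mul_delta2 hac rfl, neg_one_pow_ss, one_smul, one_smul]
  have hHaC : Egen n N k a a * Egen n N k b c
      = Egen n N k b c * Egen n N k a a := by
    rw [Egen_mul_free hab (Ne.symm hac), neg_one_pow_ss, one_smul]
  have hHaC' : Egen n N k a a * Egen n N k c b
      = Egen n N k c b * Egen n N k a a := by
    rw [Egen_mul_free hac (Ne.symm hab), neg_one_pow_ss, one_smul]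
  have hHaHb : Egen n N k a a * Egen n N k b b
      = Egen n N k b b * Egen n N k a a := by
    rw [Egen_mul_free hab (Ne.symm hab), neg_one_pow_ss, one_smul]
  have hk := key _ _ hs ht (Egen n N k a b) (Egen n N k b a) (Egen n N k a c) (Egen n N k c a)
    (Egen n N k b c) (Egen n N k c b) (Egen n N k a a) (Egen n N k b b)
    hA'B hA'B' hAB hAB' hAC hAC' hA'C hA'C' hHaA hHaA' hHbA hHbA' hHaB hHaB' hHaC hHaC' hHaHb
  rw [comm_add_right] at hk
  unfold Xop
  rw [comm_smul_left, comm_smul_right, comm_smul_left, comm_smul_right, smul_smul, smul_smul,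
    ← smul_add, hk, smul_zero]

lemma commute_eop_cc_eop_of_ne {j i : Fin k} (hji : j ≠ i) (c a b : Fin N) :
    Commute (eop n N k j c c) (eop n N k i a b) := by
  show _ * _ = _ * _
  rw [eop_mul_eop_swap hji, neg_one_pow_ss, one_smul]

lemma commute_eop_cc_eop {j i : Fin k} {c a b : Fin N} (hca : c ≠ a) (hcb : c ≠ b) :
    Commute (eop n N k j c c) (eop n N k i a b) := by
  by_cases hji : j = i
  · subst hji
    show _ * _ = _ * _
    rw [eop_mul_eop_same, eop_mul_eop_same, if_neg hca, if_neg (Ne.symm hcb)]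
  · exact commute_eop_cc_eop_of_ne hji c a b

lemma commute_eop_cc_Egen {j : Fin k} {c a b : Fin N} (hca : c ≠ a) (hcb : c ≠ b) :
    Commute (eop n N k j c c) (Egen n N k a b) :=
  Commute.sum_right _ _ _ (fun i _ => commute_eop_cc_eop hca hcb)

lemma hD_concrete (z : Fin k → ℂ) (a b : Fin N) :
    Commute (Dop n N k z a) (Dop n N k z b) := by
  apply Commute.sum_left; intro j _
  apply Commute.smul_left
  apply Commute.sum_right; intro i _
  apply Commute.smul_right
  by_cases hji : j = i
  · subst hji
    show _ * _ = _ * _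
    rw [eop_mul_eop_same, eop_mul_eop_same]
    by_cases hab : a = b
    · subst hab; rfl
    · rw [if_neg hab, if_neg (Ne.symm hab)]
  · exact commute_eop_cc_eop_of_ne hji a b b

lemma hDX_concrete (z : Fin k → ℂ) (c a b : Fin N) (hca : c ≠ a) (hcb : c ≠ b) :
    Commute (Dop n N k z c) (Xop n N k a b) := by
  apply Commute.sum_left; intro j _
  apply Commute.smul_left
  unfold Xop
  apply Commute.smul_right
  exact ((commute_eop_cc_Egen hca hcb).mul_right (commute_eop_cc_Egen hcb hca)).sub_right
    (commute_eop_cc_Egen hca hca)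

lemma pair_comm_same {a b : Fin N} (hab : a ≠ b) (j : Fin k) (u v : Fin N)
    (hu : u = a ∨ u = b) (hv : v = a ∨ v = b) :
    Commute (eop n N k j a a + eop n N k j b b) (eop n N k j u v) := by
  show _ * _ = _ * _
  rw [add_mul, mul_add, eop_mul_eop_same, eop_mul_eop_same, eop_mul_eop_same, eop_mul_eop_same]
  rcases hu with hu | hu <;> rcases hv with hv | hv <;> subst hu <;> subst hv <;>
    simp [hab, Ne.symm hab]

lemma pair_comm {a b : Fin N} (hab : a ≠ b) (j : Fin k) (u v : Fin N)
    (hu : u = a ∨ u = b) (hv : v = a ∨ v = b) :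
    Commute (eop n N k j a a + eop n N k j b b) (Egen n N k u v) := by
  apply Commute.sum_right; intro i _
  by_cases hji : j = i
  · subst hji; exact pair_comm_same hab _ u v hu hv
  · exact Commute.add_left (commute_eop_cc_eop_of_ne hji a u v)
      (commute_eop_cc_eop_of_ne hji b u v)

lemma hDX2_concrete (z : Fin k → ℂ) (a b : Fin N) (hab : a ≠ b) :
    comm (Dop n N k z a) (Xop n N k a b) + comm (Dop n N k z b) (Xop n N k a b) = 0 := by
  rw [← comm_add_left]
  apply comm_eq_zero_of_commute
  have hsum : Dop n N k z a + Dop n N k z b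
      = ∑ j : Fin k, z j • (eop n N k j a a + eop n N k j b b) := by
    unfold Dop
    rw [← Finset.sum_add_distrib]
    exact Finset.sum_congr rfl fun j _ => (smul_add _ _ _).symm
  rw [hsum]
  apply Commute.sum_left; intro j _
  apply Commute.smul_left
  unfold Xop
  apply Commute.smul_right
  exact ((pair_comm hab j a b (Or.inl rfl) (Or.inr rfl)).mul_right
      (pair_comm hab j b a (Or.inr rfl) (Or.inl rfl))).sub_right
    (pair_comm hab j a a (Or.inl rfl) (Or.inl rfl))

end Concrete
end Glnm

open Glnm in
/-- Theorem 1, first part: the dynamical connection matrices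
commute pairwise, `[A_a, A_b] = 0`. -/
theorem dynamical_flatness (n m k : ℕ) (hk : 1 ≤ k)
    (z : Fin k → ℂ) (lam : Fin (n + m) → ℂ)
    (hlam : ∀ a b : Fin (n + m), a ≠ b → lam a ≠ lam b)
    (a b : Fin (n + m)) :
    comm (dynA n (n + m) k z lam a) (dynA n (n + m) k z lam b) = 0 := by
  have hdyn : ∀ c : Fin (n + m), dynA n (n + m) k z lam c
      = Dop n (n + m) k z c + ∑ d ∈ Finset.univ.filter (fun d : Fin (n + m) => d ≠ c),
          (lam c - lam d)⁻¹ • Xop n (n + m) k c d := by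
    intro c
    unfold dynA Dop Xop
    congr 1
    apply Finset.sum_congr rfl
    intro d _
    rw [smul_smul, div_eq_mul_inv, mul_comm]
  rw [hdyn a, hdyn b]
  exact flat_abstract lam hlam (Dop n (n + m) k z) (Xop n (n + m) k)
    hsym_concrete hdisj_concrete htri_concrete (hD_concrete z) (hDX_concrete z)
    (hDX2_concrete z) a b
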